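/- Let q ∈ ℂ with 0 < |q| < 1, and let w be a nonzero complex number with w ≠ q^n for every integer n (in particular w ≠ 1). Then g_3(w;q) = −1/w + 𝓡(w;q)/(w(1−w)). -/

import Mathlib

open Complex

noncomputable section

/-- Finite q-Pochhammer symbol `(a;q)_n`. -/
def qPoch (a q : ℂ) (n : ℕ) : ℂ := ∏ j ∈ Finset.range n, (1 - a * q ^ j)

/-- Infinite q-Pochhammer symbol `(a;q)_∞`. -/
def qPochInf (a q : ℂ) : ℂ := ∏' j : ℕ, (1 - a * q ^ j)

/-- Jacobi theta function `θ(z;τ)`. -/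
def theta (z τ : ℂ) : ℂ :=
  ∑' n : ℤ, (-1 : ℂ) ^ n * Complex.exp (Real.pi * Complex.I * (2 * n + 1) * z) *
    Complex.exp (2 * Real.pi * Complex.I * τ * ((n : ℂ) * (n + 1) / 2 + 1 / 8))

/-- Zwegers' mock Jacobi form `μ(u,v;τ)`. -/
def mu (u v τ : ℂ) : ℂ :=
  Complex.exp (Real.pi * Complex.I * u) / theta v τ *
    ∑' n : ℤ, (-Complex.exp (2 * Real.pi * Complex.I * v)) ^ n *
      Complex.exp (Real.pi * Complex.I * τ * n * (n + 1)) /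
      (1 - Complex.exp (2 * Real.pi * Complex.I * u) *
        Complex.exp (2 * Real.pi * Complex.I * τ) ^ n)

/-- Dedekind eta function `η(τ)`. -/
def eta (τ : ℂ) : ℂ :=
  Complex.exp (Real.pi * Complex.I * τ / 12) *
    ∏' n : ℕ, (1 - Complex.exp (2 * Real.pi * Complex.I * τ * (n + 1)))

/-- Universal mock theta function `g₂(w;q)`. -/
def g2 (w q : ℂ) : ℂ :=
  ∑' n : ℕ, qPoch (-q) q n * q ^ (n * (n + 1) / 2) /
    (qPoch w q (n + 1) * qPoch (q / w) q (n + 1))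

/-- Universal mock theta function `g₃(w;q)`. -/
def g3 (w q : ℂ) : ℂ :=
  ∑' n : ℕ, q ^ (n * (n + 1)) / (qPoch w q (n + 1) * qPoch (q / w) q (n + 1))

/-- Rank generating function `𝓡(w;q)`. -/
def rankGF (w q : ℂ) : ℂ :=
  ∑' n : ℕ, q ^ (n ^ 2) / ∏ k ∈ Finset.range n, ((1 - w * q ^ (k + 1)) * (1 - q ^ (k + 1) / w))

/-- Crank generating function `𝓒(w;q)`. -/
def crankGF (w q : ℂ) : ℂ := qPochInf q q / (qPochInf (w * q) q * qPochInf (q / w) q)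

/-- The series `K'(w;τ)` with `q = e^{2πiτ}`. -/
def Kp (w q : ℂ) : ℂ :=
  ∑' n : ℕ, (-1 : ℂ) ^ n * q ^ (n ^ 2) * qPoch q (q ^ 2) n /
    (qPoch (w * q ^ 2) (q ^ 2) n * qPoch (q ^ 2 / w) (q ^ 2) n)

/-- The series `K''(w;τ)` with `q = e^{2πiτ}` (the sum starts at `n = 1`). -/
def Kpp (w q : ℂ) : ℂ :=
  ∑' n : ℕ, (-1 : ℂ) ^ (n + 1) * q ^ ((n + 1) ^ 2) * qPoch q (q ^ 2) n /
    (qPoch (w * q) (q ^ 2) (n + 1) * qPoch (q / w) (q ^ 2) (n + 1))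

/-- The series `ρ(a,b,c)` from the three variable reciprocity theorem. -/
def rho (a b c q : ℂ) : ℂ :=
  (1 + 1 / b) * ∑' n : ℕ, qPoch c q n * (-1 : ℂ) ^ n * q ^ (n * (n + 1) / 2) * (a / b) ^ n /
    (qPoch (-a * q) q n * qPoch (-c / b) q (n + 1))

open Filter Topology

namespace G3Aux
def u (w q : ℂ) (k : ℕ) : ℂ := (1 - w * q ^ (k + 1)) * (1 - q ^ (k + 1) / w)
def D (w q : ℂ) (n : ℕ) : ℂ := ∏ k ∈ Finset.range n, u w q k
def rterm (w q : ℂ) (n : ℕ) : ℂ := q ^ (n ^ 2) / D w q n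
def aterm (w q : ℂ) (n : ℕ) : ℂ :=
  q ^ (n * (n + 1)) / (qPoch w q (n + 1) * qPoch (q / w) q (n + 1))
def tterm (w q : ℂ) (n : ℕ) : ℂ := w * q ^ (n * (n + 1)) / D w q n

lemma D_succ (w q : ℂ) (n : ℕ) : D w q (n + 1) = D w q n * u w q n := by
  simp [D, Finset.prod_range_succ]


lemma rterm_succ (w q : ℂ) (n : ℕ) :
    rterm w q (n + 1) = rterm w q n * (q ^ (2 * n + 1) / u w q n) := by
  have e : (n + 1) ^ 2 = n ^ 2 + (2 * n + 1) := by ring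
  rw [rterm, rterm, D_succ, e, pow_add, mul_div_mul_comm]

lemma tterm_succ (w q : ℂ) (n : ℕ) :
    tterm w q (n + 1) = tterm w q n * (q ^ (2 * n + 2) / u w q n) := by
  have e : (n + 1) * (n + 1 + 1) = n * (n + 1) + (2 * n + 2) := by ring
  rw [tterm, tterm, D_succ, e, pow_add, ← mul_assoc, mul_div_mul_comm]

lemma aterm_succ (w q : ℂ) (n : ℕ) :
    aterm w q (n + 1) = aterm w q n *
      (q ^ (2 * n + 2) / ((1 - w * q ^ (n + 1)) * (1 - q / w * q ^ (n + 1)))) := by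
  have e : (n + 1) * (n + 1 + 1) = n * (n + 1) + (2 * n + 2) := by ring
  have hp : ∀ a : ℂ, qPoch a q (n + 1 + 1) = qPoch a q (n + 1) * (1 - a * q ^ (n + 1)) :=
    fun a => Finset.prod_range_succ _ _
  rw [aterm, aterm, e, pow_add, hp, hp, mul_mul_mul_comm, mul_div_mul_comm]

lemma denom_eq (w q : ℂ) (n : ℕ) :
    qPoch w q (n + 1) * qPoch (q / w) q (n + 1)
      = (1 - w) * (D w q n * (1 - q ^ (n + 1) / w)) := by
  have h1 : qPoch w q (n + 1) = (1 - w) * ∏ k ∈ Finset.range n, (1 - w * q ^ (k + 1)) := by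
    rw [qPoch, Finset.prod_range_succ']
    simp [mul_comm]
  have h2 : qPoch (q / w) q (n + 1)
      = (∏ k ∈ Finset.range n, (1 - q ^ (k + 1) / w)) * (1 - q ^ (n + 1) / w) := by
    rw [qPoch, Finset.prod_range_succ]
    congr 1
    · exact Finset.prod_congr rfl fun k _ => by rw [div_mul_eq_mul_div, ← pow_succ']
    · rw [div_mul_eq_mul_div, ← pow_succ']
  rw [h1, h2, D]
  rw [show (fun k => u w q k) = fun k => (1 - w * q ^ (k + 1)) * (1 - q ^ (k + 1) / w) from rfl]
  rw [Finset.prod_mul_distrib]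
  ring

section Step
variable {w q : ℂ} (hw0 : w ≠ 0) (h1w : (1:ℂ) - w ≠ 0)
  (hA : ∀ k : ℕ, (1:ℂ) - w * q ^ (k + 1) ≠ 0)
  (hB : ∀ k : ℕ, (1:ℂ) - q ^ (k + 1) / w ≠ 0)

include hA hB in
lemma D_ne (n : ℕ) : D w q n ≠ 0 := by
  rw [D]
  exact Finset.prod_ne_zero_iff.mpr fun k _ => mul_ne_zero (hA k) (hB k)

lemma key (d X y w : ℂ) (hd : d ≠ 0) (hw : w ≠ 0) (h1w : 1 - w ≠ 0)
    (ha : 1 - w * y ≠ 0) (hb : 1 - y / w ≠ 0) :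
    X * y / (d * ((1 - w * y) * (1 - y / w))) + w * X / d
      = w * (1 - w) * (X / ((1 - w) * (d * (1 - y / w))))
        + w * (X * y * y) / (d * ((1 - w * y) * (1 - y / w))) := by
  have hwy : w - y ≠ 0 := by
    intro h
    apply hb
    rw [show y = w from by linear_combination -h]
    field_simp
    ring
  have hrw : (1 : ℂ) - y / w = (w - y) / w := by field_simp
  rw [hrw]
  have ha' : (1:ℂ) - y * w ≠ 0 := by rwa [mul_comm]
  field_simp
  ring

include hw0 h1w hA hB in
lemma step (n : ℕ) :
    rterm w q (n + 1) + tterm w q n = w * (1 - w) * aterm w q n + tterm w q (n + 1) := by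
  have hD := D_ne hA hB n
  have p1 : q ^ ((n + 1) ^ 2) = q ^ (n * (n + 1)) * q ^ (n + 1) := by
    rw [← pow_add]; congr 1; ring
  have p2 : q ^ ((n + 1) * (n + 1 + 1)) = q ^ (n * (n + 1)) * q ^ (n + 1) * q ^ (n + 1) := by
    rw [← pow_add, ← pow_add]; congr 1; ring
  rw [rterm, tterm, tterm, aterm, denom_eq, D_succ, p1, p2]
  simp only [u]
  exact key (D w q n) _ _ w hD hw0 h1w (hA n) (hB n)
end Step

section PSum
variable {w q : ℂ} (hw0 : w ≠ 0) (h1w : (1:ℂ) - w ≠ 0)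
  (hA : ∀ k : ℕ, (1:ℂ) - w * q ^ (k + 1) ≠ 0)
  (hB : ∀ k : ℕ, (1:ℂ) - q ^ (k + 1) / w ≠ 0)

include hw0 h1w hA hB in
lemma psum (N : ℕ) :
    ∑ n ∈ Finset.range (N + 1), rterm w q n
      = (1 - w) + w * (1 - w) * ∑ n ∈ Finset.range N, aterm w q n + tterm w q N := by
  induction N with
  | zero => simp [rterm, tterm, D]
  | succ N ih =>
    rw [Finset.sum_range_succ, ih, Finset.sum_range_succ]
    linear_combination step hw0 h1w hA hB N
end PSum

section Conv
variable {w q : ℂ}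

lemma ev_ge_half (c : ℂ) (hq1 : ‖q‖ < 1) :
    ∀ᶠ n : ℕ in atTop, 1/2 ≤ ‖1 - c * q ^ (n + 1)‖ := by
  have hT : Tendsto (fun n : ℕ => ‖c‖ * ‖q‖ ^ (n + 1)) atTop (𝓝 0) := by
    simpa using ((tendsto_pow_atTop_nhds_zero_of_lt_one (norm_nonneg q) hq1).comp
      (tendsto_add_atTop_nat 1)).const_mul ‖c‖
  filter_upwards [hT.eventually (eventually_le_nhds (by norm_num : (0:ℝ) < 1/2))] with n hn
  have h1 : ‖(1:ℂ)‖ - ‖c * q ^ (n + 1)‖ ≤ ‖1 - c * q ^ (n + 1)‖ := norm_sub_norm_le _ _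
  rw [norm_one, norm_mul, norm_pow] at h1
  linarith

lemma ev_ge_half_div (hq1 : ‖q‖ < 1) :
    ∀ᶠ n : ℕ in atTop, 1/2 ≤ ‖1 - q ^ (n + 1) / w‖ := by
  filter_upwards [ev_ge_half w⁻¹ hq1] with n hn
  rwa [show w⁻¹ * q ^ (n + 1) = q ^ (n + 1) / w from by rw [div_eq_mul_inv, mul_comm]] at hn

lemma ev_small (hq1 : ‖q‖ < 1) : ∀ᶠ n : ℕ in atTop, ‖q‖ ^ (n + 1) ≤ 1/8 := by
  have hT : Tendsto (fun n : ℕ => ‖q‖ ^ (n + 1)) atTop (𝓝 0) :=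
    (tendsto_pow_atTop_nhds_zero_of_lt_one (norm_nonneg q) hq1).comp (tendsto_add_atTop_nat 1)
  exact hT.eventually (eventually_le_nhds (by norm_num : (0:ℝ) < 1/8))

lemma ratio_bound (hq1 : ‖q‖ < 1) {x y : ℂ} {n m : ℕ}
    (e1 : 1/2 ≤ ‖x‖) (e2 : 1/2 ≤ ‖y‖) (hm : n + 1 ≤ m) (e3 : ‖q‖ ^ (n + 1) ≤ 1/8) :
    ‖q ^ m / (x * y)‖ ≤ 1/2 := by
  rw [norm_div, norm_pow, norm_mul]
  have hnum : ‖q‖ ^ m ≤ 1/8 :=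
    le_trans (pow_le_pow_of_le_one (norm_nonneg q) hq1.le hm) e3
  have hden : 1/4 ≤ ‖x‖ * ‖y‖ := by
    calc (1/4 : ℝ) = (1/2) * (1/2) := by norm_num
    _ ≤ ‖x‖ * ‖y‖ := mul_le_mul e1 e2 (by norm_num) (le_trans (by norm_num) e1)
  calc ‖q‖ ^ m / (‖x‖ * ‖y‖) ≤ (1/8) / (1/4) :=
        div_le_div₀ (by norm_num) hnum (by norm_num) hden
  _ = 1/2 := by norm_num

lemma summable_rterm (hq1 : ‖q‖ < 1) : Summable (rterm w q) := by
  apply summable_of_ratio_norm_eventually_le (by norm_num : (1/2 : ℝ) < 1)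
  filter_upwards [ev_ge_half w hq1, ev_ge_half_div (w := w) hq1, ev_small hq1] with n e1 e2 e3
  rw [rterm_succ, norm_mul, mul_comm, u]
  exact mul_le_mul_of_nonneg_right
    (ratio_bound hq1 e1 e2 (by omega) e3) (norm_nonneg _)

lemma summable_tterm (hq1 : ‖q‖ < 1) : Summable (tterm w q) := by
  apply summable_of_ratio_norm_eventually_le (by norm_num : (1/2 : ℝ) < 1)
  filter_upwards [ev_ge_half w hq1, ev_ge_half_div (w := w) hq1, ev_small hq1] with n e1 e2 e3
  rw [tterm_succ, norm_mul, mul_comm, u]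
  exact mul_le_mul_of_nonneg_right
    (ratio_bound hq1 e1 e2 (by omega) e3) (norm_nonneg _)

lemma summable_aterm (hq1 : ‖q‖ < 1) : Summable (aterm w q) := by
  apply summable_of_ratio_norm_eventually_le (by norm_num : (1/2 : ℝ) < 1)
  filter_upwards [ev_ge_half w hq1, ev_ge_half (q / w) hq1, ev_small hq1] with n e1 e2 e3
  rw [aterm_succ, norm_mul, mul_comm]
  exact mul_le_mul_of_nonneg_right
    (ratio_bound hq1 e1 e2 (by omega) e3) (norm_nonneg _)

end Conv
end G3Aux

open G3Aux

/-- `g₃` in terms of the rank generating function. -/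
theorem g3_eq_rankGF (q : ℂ) (hq0 : 0 < ‖q‖) (hq1 : ‖q‖ < 1)
    (w : ℂ) (hw0 : w ≠ 0) (hw : ∀ n : ℤ, w ≠ q ^ n) :
    g3 w q = -1 / w + rankGF w q / (w * (1 - w)) := by
  have hq : q ≠ 0 := by
    intro h; rw [h] at hq0; simp at hq0
  have hq1' : ‖q‖ < 1 := by exact hq1
  have h1w : (1 : ℂ) - w ≠ 0 :=
    sub_ne_zero.mpr fun h => hw 0 (by rw [zpow_zero]; exact h.symm)
  have hA : ∀ k : ℕ, (1 : ℂ) - w * q ^ (k + 1) ≠ 0 := by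
    intro k h
    apply hw (-(k + 1 : ℕ) : ℤ)
    rw [zpow_neg, zpow_natCast]
    have h1 : w * q ^ (k + 1) = 1 := by linear_combination -h
    exact eq_inv_of_mul_eq_one_left h1
  have hB : ∀ k : ℕ, (1 : ℂ) - q ^ (k + 1) / w ≠ 0 := by
    intro k h
    apply hw ((k + 1 : ℕ) : ℤ)
    rw [zpow_natCast]
    have h2 : q ^ (k + 1) / w = 1 := by linear_combination -h
    rw [div_eq_one_iff_eq hw0] at h2
    exact h2.symm
  have hsa := summable_aterm (w := w) hq1'
  have hsr := summable_rterm (w := w) hq1'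
  have hst := summable_tterm (w := w) hq1'
  have hR1 : Tendsto (fun N => ∑ n ∈ Finset.range (N + 1), rterm w q n) atTop
      (𝓝 (rankGF w q)) := by
    have : rankGF w q = ∑' n, rterm w q n := rfl
    rw [this]
    exact hsr.hasSum.tendsto_sum_nat.comp (tendsto_add_atTop_nat 1)
  have hR2 : Tendsto (fun N => ∑ n ∈ Finset.range (N + 1), rterm w q n) atTop
      (𝓝 ((1 - w) + w * (1 - w) * g3 w q + 0)) := by
    apply Tendsto.congr (fun N => (psum hw0 h1w hA hB N).symm)
    have hg : g3 w q = ∑' n, aterm w q n := rfl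
    rw [hg]
    exact (tendsto_const_nhds.add ((hsa.hasSum.tendsto_sum_nat).const_mul _)).add
      hst.tendsto_atTop_zero
  have key : rankGF w q = (1 - w) + w * (1 - w) * g3 w q := by
    simpa using tendsto_nhds_unique hR1 hR2
  rw [key]
  field_simp
  ring


end
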